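/- Under the fixed-order modified Metropolis chain, if p(f_{≥i}(x)) ≥ p(f_{≥i+1}(x)) for some i ∈ {1,…,n}, then the state f_i(x) is reachable from x. -/

import Mathlib

open Matrix

/-- Flip the `i`-th coordinate of `x`. -/
def flipAt {n : ℕ} (i : Fin n) (x : Fin n → Bool) : Fin n → Bool :=
  Function.update x i (!x i)

/-- Flip the first `k` coordinates of `x` (1-indexed coordinates `1..k`). -/
def fle {n : ℕ} (k : ℕ) (x : Fin n → Bool) : Fin n → Bool :=
  fun j => if j.val < k then !x j else x j

/-- Flip coordinates `k..n` (1-indexed) of `x`; `fge (n+1) x = x`. -/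
def fge {n : ℕ} (k : ℕ) (x : Fin n → Bool) : Fin n → Bool :=
  fun j => if k ≤ j.val + 1 then !x j else x j

/-- Modified Metropolis flip probability at site `i`. -/
noncomputable def flipMod {n : ℕ} (p : (Fin n → Bool) → ℝ) (i : Fin n)
    (x : Fin n → Bool) : ℝ :=
  if p x < p (flipAt i x) then 1
  else if p (flipAt i x) < p x then p (flipAt i x) / p x
  else 1 / 2

/-- Standard Metropolis flip probability at site `i`. -/
noncomputable def flipStd {n : ℕ} (p : (Fin n → Bool) → ℝ) (i : Fin n)
    (x : Fin n → Bool) : ℝ :=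
  min 1 (p (flipAt i x) / p x)

/-- Single-site transition matrix of the modified Metropolis operator. -/
noncomputable def Tmod {n : ℕ} (p : (Fin n → Bool) → ℝ) (i : Fin n) :
    Matrix (Fin n → Bool) (Fin n → Bool) ℝ :=
  fun x y =>
    if y = flipAt i x then flipMod p i x
    else if y = x then 1 - flipMod p i x
    else 0

/-- Single-site transition matrix of the standard Metropolis operator. -/
noncomputable def Tstd {n : ℕ} (p : (Fin n → Bool) → ℝ) (i : Fin n) :
    Matrix (Fin n → Bool) (Fin n → Bool) ℝ :=
  fun x y =>
    if y = flipAt i x then flipStd p i x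
    else if y = x then 1 - flipStd p i x
    else 0

/-- Full sweep `T = T_n ∘ ⋯ ∘ T_1` (apply `T_1` first) of the modified operators. -/
noncomputable def sweep {n : ℕ} (p : (Fin n → Bool) → ℝ) :
    Matrix (Fin n → Bool) (Fin n → Bool) ℝ :=
  (List.ofFn (fun i : Fin n => Tmod p i)).prod

/-- Full sweep of the standard Metropolis operators. -/
noncomputable def sweepStd {n : ℕ} (p : (Fin n → Bool) → ℝ) :
    Matrix (Fin n → Bool) (Fin n → Bool) ℝ :=
  (List.ofFn (fun i : Fin n => Tstd p i)).prod

/-- If `p(f_{≥i}(x)) ≥ p(f_{≥i+1}(x))` then `f_i(x)` is reachable from `x`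
under the fixed-order modified Metropolis chain. -/
lemma flipAt_ne {n : ℕ} (i : Fin n) (x : Fin n → Bool) : flipAt i x ≠ x := by
  intro hh
  have := congrFun hh i
  simp [flipAt] at this

-- path lemmas
lemma flip_fle {n : ℕ} (j : ℕ) (hj : j < n) (x : Fin n → Bool) :
    flipAt ⟨j, hj⟩ (fle j x) = fle (j + 1) x := by
  funext m
  simp only [flipAt, fle, Function.update_apply]
  by_cases hm : m = (⟨j, hj⟩ : Fin n)
  · subst hm; simp
  · have hmv : m.val ≠ j := fun hc => hm (Fin.ext hc)
    rw [if_neg hm]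
    have : (m.val < j + 1) ↔ (m.val < j) := by omega
    simp [this]

lemma flip_fge {n : ℕ} (j : ℕ) (hj : j < n) (x : Fin n → Bool) :
    flipAt ⟨j, hj⟩ (fge (j + 1) x) = fge (j + 2) x := by
  funext m
  simp only [flipAt, fge, Function.update_apply]
  by_cases hm : m = (⟨j, hj⟩ : Fin n)
  · subst hm; simp
  · have hmv : m.val ≠ j := fun hc => hm (Fin.ext hc)
    rw [if_neg hm]
    have : (j + 2 ≤ m.val + 1) ↔ (j + 1 ≤ m.val + 1) := by omega
    simp [this]

def pathB {n : ℕ} (i : Fin n) (x : Fin n → Bool) (j : ℕ) : Fin n → Bool :=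
  if j ≤ i.val then fge (j + 1) x
  else fun m => if m = i then !x m else if m.val < j then x m else !x m

lemma pathB_zero {n : ℕ} (i : Fin n) (x : Fin n → Bool) :
    pathB i x 0 = fle n x := by
  funext m
  simp [pathB, fge, fle, m.isLt]

lemma pathB_last {n : ℕ} (i : Fin n) (x : Fin n → Bool) :
    pathB i x n = flipAt i x := by
  funext m
  have : ¬ (n ≤ i.val) := by omega
  simp only [pathB, if_neg this, flipAt, Function.update_apply]
  by_cases hm : m = i
  · subst hm; simp
  · simp [hm, m.isLt]

lemma pathB_succ_of_gt {n : ℕ} (i : Fin n) (x : Fin n → Bool) :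
    pathB i x (i.val + 1) = fge (i.val + 1) x := by
  funext m
  have : ¬ (i.val + 1 ≤ i.val) := by omega
  simp only [pathB, if_neg this, fge]
  by_cases hm : m = i
  · subst hm; simp
  · have hmv : m.val ≠ i.val := fun hc => hm (Fin.ext hc)
    rw [if_neg hm]
    have h2 : (m.val < i.val + 1) ↔ ¬ (i.val + 1 ≤ m.val + 1) := by omega
    by_cases hlt : m.val < i.val + 1
    · rw [if_pos hlt, if_neg (h2.1 hlt ∘ id)]
    · rw [if_neg hlt, if_pos (by omega)]

lemma pathB_step_lt {n : ℕ} (i : Fin n) (x : Fin n → Bool) (j : ℕ) (hj : j < n)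
    (hji : j ≤ i.val) :
    pathB i x j = fge (j + 1) x := by
  simp [pathB, hji]

lemma pathB_step_gt {n : ℕ} (i : Fin n) (x : Fin n → Bool) (j : ℕ) (hj : j < n)
    (hji : i.val < j) :
    flipAt ⟨j, hj⟩ (pathB i x j) = pathB i x (j + 1) := by
  have h1 : ¬ (j ≤ i.val) := by omega
  have h2 : ¬ (j + 1 ≤ i.val) := by omega
  funext m
  simp only [pathB, if_neg h1, if_neg h2, flipAt, Function.update_apply]
  by_cases hm : m = (⟨j, hj⟩ : Fin n)
  · subst hm
    have hne : (⟨j, hj⟩ : Fin n) ≠ i := Fin.ne_of_val_ne (show j ≠ i.val by omega)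
    simp [hne]
  · have hmv : m.val ≠ j := fun hc => hm (Fin.ext hc)
    rw [if_neg hm]
    by_cases hmi : m = i
    · simp [hmi]
    · have : (m.val < j + 1) ↔ (m.val < j) := by omega
      simp [hmi, this]

lemma flipMod_pos' {n : ℕ} (p : (Fin n → Bool) → ℝ) (hp : ∀ x, 0 < p x)
    (i : Fin n) (x : Fin n → Bool) : 0 < flipMod p i x := by
  unfold flipMod
  split_ifs with h1 h2
  · norm_num
  · exact div_pos (hp _) (hp _)
  · norm_num

lemma flipMod_le_one' {n : ℕ} (p : (Fin n → Bool) → ℝ) (hp : ∀ x, 0 < p x)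
    (i : Fin n) (x : Fin n → Bool) : flipMod p i x ≤ 1 := by
  unfold flipMod
  split_ifs with h1 h2
  · exact le_rfl
  · exact le_of_lt ((div_lt_one (hp x)).2 h2)
  · norm_num

lemma flipMod_lt_one' {n : ℕ} (p : (Fin n → Bool) → ℝ) (hp : ∀ x, 0 < p x)
    (i : Fin n) (x : Fin n → Bool) (hnlt : ¬ p x < p (flipAt i x)) :
    flipMod p i x < 1 := by
  unfold flipMod
  rw [if_neg hnlt]
  split_ifs with h2
  · exact (div_lt_one (hp x)).2 h2
  · norm_num

lemma Tmod_nonneg' {n : ℕ} (p : (Fin n → Bool) → ℝ) (hp : ∀ x, 0 < p x)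
    (i : Fin n) (a b : Fin n → Bool) : 0 ≤ Tmod p i a b := by
  unfold Tmod
  split_ifs with h1 h2
  · exact le_of_lt (flipMod_pos' p hp i a)
  · linarith [flipMod_le_one' p hp i a]
  · exact le_rfl

lemma Tmod_flip {n : ℕ} (p : (Fin n → Bool) → ℝ) (i : Fin n) (a : Fin n → Bool) :
    Tmod p i a (flipAt i a) = flipMod p i a := by
  unfold Tmod; rw [if_pos rfl]

lemma Tmod_stay {n : ℕ} (p : (Fin n → Bool) → ℝ) (i : Fin n) (a : Fin n → Bool) :
    Tmod p i a a = 1 - flipMod p i a := by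
  unfold Tmod; rw [if_neg (Ne.symm (flipAt_ne i a)), if_pos rfl]

lemma mul_entry_nonneg' {S : Type*} [Fintype S] (A B : Matrix S S ℝ)
    (hA : ∀ a b, 0 ≤ A a b) (hB : ∀ a b, 0 ≤ B a b) :
    ∀ a b, 0 ≤ (A * B) a b := by
  intro a b
  rw [Matrix.mul_apply]
  exact Finset.sum_nonneg fun c _ => mul_nonneg (hA a c) (hB c b)

lemma prod_entry_nonneg' {S : Type*} [Fintype S] [DecidableEq S]
    (L : List (Matrix S S ℝ)) (h : ∀ M ∈ L, ∀ a b, 0 ≤ M a b) :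
    ∀ a b, 0 ≤ L.prod a b := by
  induction L with
  | nil =>
    intro a b
    simp only [List.prod_nil, Matrix.one_apply]
    split_ifs <;> norm_num
  | cons M L ih =>
    simp only [List.prod_cons]
    exact mul_entry_nonneg' _ _ (h M (by simp)) (ih fun M' hM' => h M' (by simp [hM']))

lemma prod_entry_pos' {S : Type*} [Fintype S] [DecidableEq S] :
    ∀ (L : List (Matrix S S ℝ)) (s : ℕ → S),
      (∀ M ∈ L, ∀ a b, 0 ≤ M a b) →
      (∀ j (hj : j < L.length), 0 < L.get ⟨j, hj⟩ (s j) (s (j + 1))) →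
      0 < L.prod (s 0) (s L.length) := by
  intro L
  induction L with
  | nil => intro s _ _; simp [Matrix.one_apply]
  | cons M L ih =>
    intro s hnn hstep
    have hM : 0 < M (s 0) (s 1) := hstep 0 (by simp)
    have hP : 0 < L.prod (s 1) (s (L.length + 1)) := by
      have := ih (fun j => s (j + 1)) (fun M' hM' => hnn M' (by simp [hM']))
        (fun j hj => hstep (j + 1) (by simpa using Nat.succ_lt_succ hj))
      simpa using this
    have hnnL : ∀ a b, 0 ≤ L.prod a b :=
      prod_entry_nonneg' L fun M' hM' => hnn M' (by simp [hM'])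
    have hnnM : ∀ a b, 0 ≤ M a b := hnn M (by simp)
    simp only [List.prod_cons, List.length_cons]
    rw [Matrix.mul_apply]
    have key : M (s 0) (s 1) * L.prod (s 1) (s (L.length + 1)) ≤
        ∑ c, M (s 0) c * L.prod c (s (L.length + 1)) :=
      Finset.single_le_sum (f := fun c => M (s 0) c * L.prod c (s (L.length + 1)))
        (fun c _ => mul_nonneg (hnnM _ _) (hnnL _ _)) (Finset.mem_univ _)
    exact lt_of_lt_of_le (mul_pos hM hP) key

theorem stmt8 {n : ℕ} (p : (Fin n → Bool) → ℝ) (hp : ∀ x, 0 < p x)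
    (x : Fin n → Bool) (i : Fin n)
    (h : p (fge (i.val + 2) x) ≤ p (fge (i.val + 1) x)) :
    ∃ k : ℕ, 1 ≤ k ∧ 0 < (sweep p ^ k) x (flipAt i x) := by
  refine ⟨2, by norm_num, ?_⟩
  set L : List (Matrix (Fin n → Bool) (Fin n → Bool) ℝ) :=
    List.ofFn (fun i : Fin n => Tmod p i) with hL
  have hnn : ∀ M ∈ L, ∀ a b, 0 ≤ M a b := by
    intro M hM a b
    rw [hL, List.mem_ofFn] at hM
    obtain ⟨j, rfl⟩ := hM
    exact Tmod_nonneg' p hp j a b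
  have hlen : L.length = n := by simp [hL]
  have hget : ∀ (j : ℕ) (hj : j < n),
      L.get ⟨j, by omega⟩ = Tmod p ⟨j, hj⟩ := by
    intro j hj
    simp [hL, List.get_ofFn]
  -- first sweep: x → fle n x
  have h1 : 0 < sweep p x (fle n x) := by
    have hstep : ∀ j (hj : j < L.length),
        0 < L.get ⟨j, hj⟩ (fle j x) (fle (j + 1) x) := by
      intro j hj
      rw [hlen] at hj
      rw [hget j hj, ← flip_fle j hj x, Tmod_flip]
      exact flipMod_pos' p hp _ _
    have := prod_entry_pos' L (fun j => fle j x) hnn hstep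
    rw [hlen] at this
    have h0 : fle 0 x = x := by funext m; simp [fle]
    exact (by simpa only [h0] using this : 0 < L.prod x (fle n x))
  -- second sweep: fle n x → flipAt i x, along pathB
  have h2 : 0 < sweep p (fle n x) (flipAt i x) := by
    have hstep : ∀ j (hj : j < L.length),
        0 < L.get ⟨j, hj⟩ (pathB i x j) (pathB i x (j + 1)) := by
      intro j hj
      rw [hlen] at hj
      rw [hget j hj]
      rcases lt_trichotomy j i.val with hji | hji | hji
      · -- flip
        rw [pathB_step_lt i x j hj (le_of_lt hji),
            pathB_step_lt i x (j + 1) (by omega) hji,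
            show (j + 1 + 1) = j + 2 from rfl, ← flip_fge j hj x, Tmod_flip]
        exact flipMod_pos' p hp _ _
      · -- stay at site i
        subst hji
        have hfi : (⟨i.val, hj⟩ : Fin n) = i := by ext; rfl
        rw [hfi, pathB_step_lt i x i.val hj le_rfl, pathB_succ_of_gt]
        rw [Tmod_stay]
        have hflip : flipAt i (fge (i.val + 1) x) = fge (i.val + 2) x := by
          have := flip_fge i.val hj x
          rwa [hfi] at this
        have hnlt : ¬ p (fge (i.val + 1) x) < p (flipAt i (fge (i.val + 1) x)) := by
          rw [hflip]; exact not_lt.2 h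
        have := flipMod_lt_one' p hp i (fge (i.val + 1) x) hnlt
        linarith
      · -- flip
        rw [← pathB_step_gt i x j hj hji, Tmod_flip]
        exact flipMod_pos' p hp _ _
    have := prod_entry_pos' L (pathB i x) hnn hstep
    rw [hlen] at this
    exact (by simpa only [pathB_zero, pathB_last] using this : 0 < L.prod (fle n x) (flipAt i x))
  have hAnn : ∀ a b, 0 ≤ sweep p a b := prod_entry_nonneg' L hnn
  rw [pow_two, Matrix.mul_apply]
  have key : sweep p x (fle n x) * sweep p (fle n x) (flipAt i x) ≤
      ∑ c, sweep p x c * sweep p c (flipAt i x) :=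
    Finset.single_le_sum (f := fun c => sweep p x c * sweep p c (flipAt i x))
      (fun c _ => mul_nonneg (hAnn _ _) (hAnn _ _)) (Finset.mem_univ _)
  exact lt_of_lt_of_le (mul_pos h1 h2) key
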